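/- Let G be a finite simple graph whose IR-graph H is connected, and let X be an IR(G)-set such that either (i) the induced subgraph G[X] has exactly one edge, or (ii) X is independent but at least two vertices of X have X-external private neighbours. Then H contains an induced 4-cycle C_4. -/

import Mathlib

open SimpleGraph

section IRDefs

variable {V : Type*}

/-- `w` is a `D`-private neighbour of `v`: `w` is dominated by `v` but by no other
vertex of `D`. -/
def IsPrivateNbr (G : SimpleGraph V) (D : Set V) (v w : V) : Prop :=
  (w = v ∨ G.Adj v w) ∧ ∀ u ∈ D, u ≠ v → ¬(w = u ∨ G.Adj u w)

/-- The set `PN(v, D)` of `D`-private neighbours of `v`. -/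
def PN (G : SimpleGraph V) (v : V) (D : Set V) : Set V := {w | IsPrivateNbr G D v w}

/-- The set `EPN(v, D) = PN(v, D) − D` of external `D`-private neighbours of `v`. -/
def EPN (G : SimpleGraph V) (v : V) (D : Set V) : Set V := PN G v D \ D

/-- A set `D` is irredundant if every vertex of `D` has a `D`-private neighbour. -/
def Irredundant (G : SimpleGraph V) (D : Set V) : Prop := ∀ v ∈ D, (PN G v D).Nonempty

/-- The upper irredundance number `IR(G)`. -/
noncomputable def IRnum (G : SimpleGraph V) : ℕ :=
  sSup {n | ∃ D : Set V, Irredundant G D ∧ D.ncard = n}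

/-- An `IR(G)`-set: an irredundant set of maximum cardinality `IR(G)`. -/
def IsIRSet (G : SimpleGraph V) (D : Set V) : Prop :=
  Irredundant G D ∧ D.ncard = IRnum G

/-- The `IR`-graph of `G`: vertices are the `IR(G)`-sets, and `D` is adjacent to `D'`
iff `D' = (D − {u}) ∪ {v}` for some `u ∈ D` and `v ∈ D' − {u}` with `uv ∈ E(G)`. -/
def IRGraph (G : SimpleGraph V) [Fintype V] :
    SimpleGraph {D : Set V // IsIRSet G D} where
  Adj D D' := ∃ a b, a ∈ D.1 ∧ b ∈ D'.1 ∧ b ≠ a ∧ G.Adj a b ∧ D'.1 = (D.1 \ {a}) ∪ {b}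
  symm := by
    refine ⟨?_⟩
    rintro ⟨D, hD⟩ ⟨D', hD'⟩ ⟨a, b, ha, hb, hba, hadj, heq⟩
    dsimp only at ha hb heq ⊢
    have hbD : b ∉ D := by
      intro hbD
      have h1 : D' = D \ {a} := by
        rw [heq]
        ext x
        simp only [Set.mem_union, Set.mem_diff, Set.mem_singleton_iff]
        constructor
        · rintro (h | rfl)
          · exact h
          · exact ⟨hbD, hba⟩
        · exact Or.inl
      have h2 : D'.ncard = D.ncard - 1 := by
        rw [h1, Set.ncard_diff_singleton_of_mem ha]
      have h3 : D.ncard = D'.ncard := by rw [hD.2, hD'.2]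
      have h4 : 0 < D.ncard := (Set.ncard_pos (Set.toFinite D)).2 ⟨a, ha⟩
      omega
    refine ⟨b, a, hb, ha, fun h => hba h.symm, hadj.symm, ?_⟩
    rw [heq]
    ext x
    simp only [Set.mem_union, Set.mem_diff, Set.mem_singleton_iff]
    constructor
    · intro hx
      by_cases hxa : x = a
      · exact Or.inr hxa
      · have hxb : x ≠ b := fun h => hbD (h ▸ hx)
        exact Or.inl ⟨Or.inl ⟨hx, hxa⟩, hxb⟩
    · rintro (⟨(⟨hx, _⟩ | rfl), hxb⟩ | rfl)
      · exact hx
      · exact absurd rfl hxb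
      · exact ha
  loopless := by
    refine ⟨?_⟩
    rintro ⟨D, hD⟩ ⟨a, b, ha, hb, hba, hadj, heq⟩
    dsimp only at ha hb heq
    have h2 : a ∈ (D \ {a}) ∪ {b} := heq ▸ ha
    rcases h2 with h | h
    · exact h.2 rfl
    · exact hba h.symm

end IRDefs

section AuxC4

variable {V : Type*} {G : SimpleGraph V}

lemma irred_swap {X : Set V} {x x' : V} (hx'X : x' ∉ X)
    (ha : ∀ u ∈ X, u ≠ x → ¬(x' = u ∨ G.Adj u x'))
    (hb : ∀ u ∈ X, u ≠ x → ∀ v ∈ X, v ≠ x → ¬G.Adj u v) :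
    Irredundant G ((X \ {x}) ∪ {x'}) := by
  rintro v (⟨hvX, hvx⟩ | (rfl : v = x'))
  · refine ⟨v, Or.inl rfl, ?_⟩
    rintro u hu hune (h | hadj)
    · rcases hu with ⟨huX, hux⟩ | rfl
      · exact hune h.symm
      · exact hx'X (h ▸ hvX)
    · rcases hu with ⟨huX, hux⟩ | rfl
      · exact hb u huX hux v hvX hvx hadj
      · exact ha v hvX hvx (Or.inr hadj.symm)
  · refine ⟨v, Or.inl rfl, ?_⟩
    rintro u hu hune (h | hadj)
    · rcases hu with ⟨huX, hux⟩ | rfl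
      · exact ha u huX hux (Or.inl h)
      · exact hune rfl
    · rcases hu with ⟨huX, hux⟩ | rfl
      · exact ha u huX hux (Or.inr hadj)
      · exact hune rfl

lemma irred_three {X : Set V} {x y x' y' : V} (hx : x ∈ X) (hy : y ∈ X) (hxy : x ≠ y)
    (hx'X : x' ∉ X) (hy'X : y' ∉ X)
    (hax : G.Adj x x') (hay : G.Adj y y')
    (ha : ∀ u ∈ X, u ≠ x → ¬(x' = u ∨ G.Adj u x'))
    (ha' : ∀ u ∈ X, u ≠ y → ¬(y' = u ∨ G.Adj u y'))
    (hb : ∀ u ∈ X, u ≠ x → u ≠ y → ∀ v ∈ X, ¬G.Adj u v) :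
    Irredundant G ((X \ {x, y}) ∪ {x', y'}) := by
  rintro v (⟨hvX, hv⟩ | hv)
  · simp only [Set.mem_insert_iff, Set.mem_singleton_iff, not_or] at hv
    refine ⟨v, Or.inl rfl, ?_⟩
    rintro u hu hune (h | hadj)
    · rcases hu with ⟨huX, _⟩ | hu
      · exact hune h.symm
      · rcases hu with rfl | rfl
        · exact hx'X (h ▸ hvX)
        · exact hy'X (h ▸ hvX)
    · rcases hu with ⟨huX, hu2⟩ | hu
      · simp only [Set.mem_insert_iff, Set.mem_singleton_iff, not_or] at hu2
        exact hb u huX hu2.1 hu2.2 v hvX hadj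
      · rcases hu with rfl | rfl
        · exact ha v hvX hv.1 (Or.inr hadj.symm)
        · exact ha' v hvX hv.2 (Or.inr hadj.symm)
  · rcases hv with rfl | rfl
    · -- v = x', private neighbour is x
      refine ⟨x, Or.inr hax.symm, ?_⟩
      rintro u hu hune (h | hadj)
      · rcases hu with ⟨huX, hu2⟩ | hu
        · simp only [Set.mem_insert_iff, Set.mem_singleton_iff, not_or] at hu2
          exact hu2.1 h.symm
        · rcases hu with rfl | rfl
          · exact hune rfl
          · exact hy'X (h ▸ hx)
      · rcases hu with ⟨huX, hu2⟩ | hu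
        · simp only [Set.mem_insert_iff, Set.mem_singleton_iff, not_or] at hu2
          exact hb u huX hu2.1 hu2.2 x hx hadj
        · rcases hu with rfl | rfl
          · exact hune rfl
          · exact ha' x hx hxy (Or.inr hadj.symm)
    · -- v = y', private neighbour is y
      refine ⟨y, Or.inr hay.symm, ?_⟩
      rintro u hu hune (h | hadj)
      · rcases hu with ⟨huX, hu2⟩ | hu
        · simp only [Set.mem_insert_iff, Set.mem_singleton_iff, not_or] at hu2
          exact hu2.2 h.symm
        · rcases hu with rfl | rfl
          · exact hx'X (h ▸ hy)
          · exact hune rfl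
      · rcases hu with ⟨huX, hu2⟩ | hu
        · simp only [Set.mem_insert_iff, Set.mem_singleton_iff, not_or] at hu2
          exact hb u huX hu2.1 hu2.2 y hy hadj
        · rcases hu with rfl | rfl
          · exact ha y hy (Ne.symm hxy) (Or.inr hadj.symm)
          · exact hune rfl

lemma ncard_swap [Fintype V] {X : Set V} {x x' : V} (hx : x ∈ X) (hx' : x' ∉ X) :
    ((X \ {x}) ∪ {x'}).ncard = X.ncard := by
  rw [Set.union_singleton,
    Set.ncard_insert_of_notMem (fun h => hx' h.1) ((X \ {x}).toFinite),
    Set.ncard_diff_singleton_of_mem hx]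
  have : 0 < X.ncard := (Set.ncard_pos X.toFinite).2 ⟨x, hx⟩
  omega

lemma build_c4 [Fintype V] (X : Set V) (hX : IsIRSet G X)
    (x y x' y' : V) (hx : x ∈ X) (hy : y ∈ X) (hxy : x ≠ y)
    (hx'X : x' ∉ X) (hy'X : y' ∉ X) (hne' : x' ≠ y')
    (hax : G.Adj x x') (hay : G.Adj y y')
    (ha : ∀ u ∈ X, u ≠ x → ¬(x' = u ∨ G.Adj u x'))
    (ha' : ∀ u ∈ X, u ≠ y → ¬(y' = u ∨ G.Adj u y'))
    (hb1 : ∀ u ∈ X, u ≠ x → ∀ v ∈ X, v ≠ x → ¬G.Adj u v)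
    (hb2 : ∀ u ∈ X, u ≠ y → ∀ v ∈ X, v ≠ y → ¬G.Adj u v)
    (hb3 : ∀ u ∈ X, u ≠ x → u ≠ y → ∀ v ∈ X, ¬G.Adj u v) :
    Nonempty (SimpleGraph.cycleGraph 4 ↪g IRGraph G) := by
  set X1 : Set V := (X \ {x}) ∪ {x'} with hX1def
  set X2 : Set V := (X \ {y}) ∪ {y'} with hX2def
  set X3 : Set V := (X \ {x, y}) ∪ {x', y'} with hX3def
  have hx'y : x' ≠ y := fun h => hx'X (h ▸ hy)
  have hy'x : y' ≠ x := fun h => hy'X (h ▸ hx)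
  -- memberships and non-memberships
  have hmx'1 : x' ∈ X1 := Or.inr rfl
  have hmy1 : y ∈ X1 := Or.inl ⟨hy, fun h => hxy (h : y = x).symm⟩
  have hmy'2 : y' ∈ X2 := Or.inr rfl
  have hmx2 : x ∈ X2 := Or.inl ⟨hx, fun h => hxy (h : x = y)⟩
  have hmx'3 : x' ∈ X3 := Or.inr (Or.inl rfl)
  have hmy'3 : y' ∈ X3 := Or.inr (Or.inr rfl)
  have hnx3 : x ∉ X3 := by
    rintro (⟨_, h⟩ | (h | h))
    · exact h (Or.inl rfl)
    · exact hx'X (h ▸ hx)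
    · exact hy'X (h ▸ hx)
  have hny3 : y ∉ X3 := by
    rintro (⟨_, h⟩ | (h | h))
    · exact h (Or.inr rfl)
    · exact hx'X (h ▸ hy)
    · exact hy'X (h ▸ hy)
  have hnx'2 : x' ∉ X2 := by
    rintro (⟨h, _⟩ | h)
    · exact hx'X h
    · exact hne' h
  have hny2 : y ∉ X2 := by
    rintro (⟨_, h⟩ | h)
    · exact h rfl
    · exact hy'X (h ▸ hy)
  have hny'1 : y' ∉ X1 := by
    rintro (⟨h, _⟩ | h)
    · exact hy'X h
    · exact hne' h.symm
  have hnx1 : x ∉ X1 := by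
    rintro (⟨_, h⟩ | h)
    · exact h rfl
    · exact hax.ne h
  -- alternative descriptions of X3
  have eq13 : X3 = (X1 \ {y}) ∪ {y'} := by
    ext z
    simp only [hX1def, hX3def, Set.mem_union, Set.mem_diff, Set.mem_insert_iff,
      Set.mem_singleton_iff, not_or]
    constructor
    · rintro (⟨hzX, hz1, hz2⟩ | (rfl | rfl))
      · exact Or.inl ⟨Or.inl ⟨hzX, hz1⟩, hz2⟩
      · exact Or.inl ⟨Or.inr rfl, hx'y⟩
      · exact Or.inr rfl
    · rintro (⟨(⟨hzX, hzx⟩ | rfl), hzy⟩ | rfl)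
      · exact Or.inl ⟨hzX, hzx, hzy⟩
      · exact Or.inr (Or.inl rfl)
      · exact Or.inr (Or.inr rfl)
  have eq23 : X3 = (X2 \ {x}) ∪ {x'} := by
    ext z
    simp only [hX2def, hX3def, Set.mem_union, Set.mem_diff, Set.mem_insert_iff,
      Set.mem_singleton_iff, not_or]
    constructor
    · rintro (⟨hzX, hz1, hz2⟩ | (rfl | rfl))
      · exact Or.inl ⟨Or.inl ⟨hzX, hz2⟩, hz1⟩
      · exact Or.inr rfl
      · exact Or.inl ⟨Or.inr rfl, hy'x⟩
    · rintro (⟨(⟨hzX, hzy⟩ | rfl), hzx⟩ | rfl)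
      · exact Or.inl ⟨hzX, hzx, hzy⟩
      · exact Or.inr (Or.inr rfl)
      · exact Or.inr (Or.inl rfl)
  -- the three new sets are IR-sets
  have hncard1 : X1.ncard = X.ncard := ncard_swap hx hx'X
  have hncard2 : X2.ncard = X.ncard := ncard_swap hy hy'X
  have hncard3 : X3.ncard = X.ncard := by
    rw [eq13]
    rw [ncard_swap hmy1 hny'1, hncard1]
  have hX1 : IsIRSet G X1 := ⟨irred_swap hx'X ha hb1, by rw [hncard1, hX.2]⟩
  have hX2 : IsIRSet G X2 := ⟨irred_swap hy'X ha' hb2, by rw [hncard2, hX.2]⟩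
  have hX3 : IsIRSet G X3 :=
    ⟨irred_three hx hy hxy hx'X hy'X hax hay ha ha' hb3, by rw [hncard3, hX.2]⟩
  -- vertices of the IR-graph
  set v0 : {D : Set V // IsIRSet G D} := ⟨X, hX⟩ with hv0
  set v1 : {D : Set V // IsIRSet G D} := ⟨X1, hX1⟩ with hv1
  set v2 : {D : Set V // IsIRSet G D} := ⟨X3, hX3⟩ with hv2
  set v3 : {D : Set V // IsIRSet G D} := ⟨X2, hX2⟩ with hv3
  -- adjacencies
  have adj01 : (IRGraph G).Adj v0 v1 := ⟨x, x', hx, hmx'1, hax.ne', hax, rfl⟩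
  have adj12 : (IRGraph G).Adj v1 v2 := ⟨y, y', hmy1, hmy'3, hay.ne', hay, eq13⟩
  have adj32 : (IRGraph G).Adj v3 v2 := ⟨x, x', hmx2, hmx'3, hax.ne', hax, eq23⟩
  have adj03 : (IRGraph G).Adj v0 v3 := ⟨y, y', hy, hmy'2, hay.ne', hay, rfl⟩
  -- non-adjacencies
  have nadj02 : ¬ (IRGraph G).Adj v0 v2 := by
    rintro ⟨a, b, haX, hbX, hba, hadj, heq⟩
    have heq' : X3 = (X \ {a}) ∪ {b} := heq
    have h1 : x = a := by
      by_contra h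
      exact hnx3 (by rw [heq']; exact Or.inl ⟨hx, h⟩)
    have h2 : y = a := by
      by_contra h
      exact hny3 (by rw [heq']; exact Or.inl ⟨hy, h⟩)
    exact hxy (h1.trans h2.symm)
  have nadj13 : ¬ (IRGraph G).Adj v1 v3 := by
    rintro ⟨a, b, haX, hbX, hba, hadj, heq⟩
    have heq' : X2 = (X1 \ {a}) ∪ {b} := heq
    have h1 : x' = a := by
      by_contra h
      exact hnx'2 (by rw [heq']; exact Or.inl ⟨hmx'1, h⟩)
    have h2 : y = a := by
      by_contra h
      exact hny2 (by rw [heq']; exact Or.inl ⟨hmy1, h⟩)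
    exact hx'y (h1.trans h2.symm)
  -- distinctness
  have d01 : v0 ≠ v1 := fun h => hx'X (by rw [show X = X1 from congrArg Subtype.val h]; exact hmx'1)
  have d02 : v0 ≠ v2 := fun h => hx'X (by rw [show X = X3 from congrArg Subtype.val h]; exact hmx'3)
  have d03 : v0 ≠ v3 := fun h => hy'X (by rw [show X = X2 from congrArg Subtype.val h]; exact hmy'2)
  have d12 : v1 ≠ v2 := fun h => hny3 (by rw [← show X1 = X3 from congrArg Subtype.val h]; exact hmy1)
  have d13 : v1 ≠ v3 := fun h => hnx'2 (by rw [← show X1 = X2 from congrArg Subtype.val h]; exact hmx'1)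
  have d23 : v2 ≠ v3 := fun h => hnx3 (by rw [show X3 = X2 from congrArg Subtype.val h]; exact hmx2)
  -- build the embedding
  refine ⟨⟨⟨![v0, v1, v2, v3], ?_⟩, ?_⟩⟩
  · intro a b h
    fin_cases a <;> fin_cases b <;>
      simp only [Matrix.cons_val_zero, Matrix.cons_val_one, Matrix.head_cons,
        Matrix.cons_val_two, Matrix.tail_cons, Matrix.cons_val_three] at h <;>
      first
        | rfl
        | exact absurd h d01 | exact absurd h.symm d01
        | exact absurd h d02 | exact absurd h.symm d02
        | exact absurd h d03 | exact absurd h.symm d03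
        | exact absurd h d12 | exact absurd h.symm d12
        | exact absurd h d13 | exact absurd h.symm d13
        | exact absurd h d23 | exact absurd h.symm d23
  · intro a b
    fin_cases a <;> fin_cases b <;>
      simp only [Function.Embedding.coeFn_mk, Matrix.cons_val_zero, Matrix.cons_val_one,
        Matrix.head_cons, Matrix.cons_val_two, Matrix.tail_cons, Matrix.cons_val_three] <;>
      first
        | exact iff_of_true adj01 (by decide) | exact iff_of_true adj01.symm (by decide)
        | exact iff_of_true adj12 (by decide) | exact iff_of_true adj12.symm (by decide)
        | exact iff_of_true adj32 (by decide) | exact iff_of_true adj32.symm (by decide)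
        | exact iff_of_true adj03 (by decide) | exact iff_of_true adj03.symm (by decide)
        | exact iff_of_false nadj02 (by decide)
        | exact iff_of_false (fun h => nadj02 h.symm) (by decide)
        | exact iff_of_false nadj13 (by decide)
        | exact iff_of_false (fun h => nadj13 h.symm) (by decide)
        | exact iff_of_false ((IRGraph G).loopless.irrefl _) (by decide)

end AuxC4

/-- If the `IR`-graph of `G` is connected and `X` is an `IR(G)`-set such that
either `G[X]` has exactly one edge, or `X` is independent with at least two
vertices having `X`-external private neighbours, then the `IR`-graph contains
an induced 4-cycle. -/
theorem statement9 {V : Type*} [Fintype V] (G : SimpleGraph V)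
    (hconn : (IRGraph G).Connected) (X : Set V) (hX : IsIRSet G X)
    (hcase :
      (∃ x y, x ∈ X ∧ y ∈ X ∧ G.Adj x y ∧
        ∀ p ∈ X, ∀ q ∈ X, G.Adj p q → (p = x ∧ q = y) ∨ (p = y ∧ q = x)) ∨
      ((∀ p ∈ X, ∀ q ∈ X, ¬ G.Adj p q) ∧
        ∃ x y, x ∈ X ∧ y ∈ X ∧ x ≠ y ∧
          (EPN G x X).Nonempty ∧ (EPN G y X).Nonempty)) :
    Nonempty (SimpleGraph.cycleGraph 4 ↪g IRGraph G) := by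
  rcases hcase with ⟨x, y, hx, hy, hadjxy, honly⟩ | ⟨hind, x, y, hx, hy, hxy, ⟨x', hx'⟩, ⟨y', hy'⟩⟩
  · -- Case (i): G[X] has exactly one edge xy
    have hxy : x ≠ y := hadjxy.ne
    -- external private neighbour of x
    obtain ⟨x', hx'1, hx'2⟩ := hX.1 x hx
    have hx'X : x' ∉ X := by
      intro hmem
      by_cases h : x' = x
      · exact hx'2 y hy hadjxy.ne' (Or.inr (h ▸ hadjxy.symm))
      · exact hx'2 x' hmem h (Or.inl rfl)
    have hax : G.Adj x x' := by
      rcases hx'1 with h | h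
      · exact absurd (h ▸ hx) hx'X
      · exact h
    -- external private neighbour of y
    obtain ⟨y', hy'1, hy'2⟩ := hX.1 y hy
    have hy'X : y' ∉ X := by
      intro hmem
      by_cases h : y' = y
      · exact hy'2 x hx hxy (Or.inr (h ▸ hadjxy))
      · exact hy'2 y' hmem h (Or.inl rfl)
    have hay : G.Adj y y' := by
      rcases hy'1 with h | h
      · exact absurd (h ▸ hy) hy'X
      · exact h
    have ha : ∀ u ∈ X, u ≠ x → ¬(x' = u ∨ G.Adj u x') := fun u hu hux => hx'2 u hu hux
    have ha' : ∀ u ∈ X, u ≠ y → ¬(y' = u ∨ G.Adj u y') := fun u hu huy => hy'2 u hu huy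
    have hne' : x' ≠ y' := by
      intro h
      exact ha y hy hxy.symm (Or.inr (h ▸ hay))
    have hb1 : ∀ u ∈ X, u ≠ x → ∀ v ∈ X, v ≠ x → ¬G.Adj u v := by
      intro u hu hux v hv hvx hadj
      rcases honly u hu v hv hadj with ⟨h1, _⟩ | ⟨_, h2⟩
      · exact hux h1
      · exact hvx h2
    have hb2 : ∀ u ∈ X, u ≠ y → ∀ v ∈ X, v ≠ y → ¬G.Adj u v := by
      intro u hu huy v hv hvy hadj
      rcases honly u hu v hv hadj with ⟨_, h2⟩ | ⟨h1, _⟩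
      · exact hvy h2
      · exact huy h1
    have hb3 : ∀ u ∈ X, u ≠ x → u ≠ y → ∀ v ∈ X, ¬G.Adj u v := by
      intro u hu hux huy v hv hadj
      rcases honly u hu v hv hadj with ⟨h1, _⟩ | ⟨h1, _⟩
      · exact hux h1
      · exact huy h1
    exact build_c4 X hX x y x' y' hx hy hxy hx'X hy'X hne' hax hay ha ha' hb1 hb2 hb3
  · -- Case (ii): X independent, two external private neighbours
    obtain ⟨⟨hx'1, hx'2⟩, hx'X⟩ := hx'
    obtain ⟨⟨hy'1, hy'2⟩, hy'X⟩ := hy'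
    have hax : G.Adj x x' := by
      rcases hx'1 with h | h
      · exact absurd (h ▸ hx) hx'X
      · exact h
    have hay : G.Adj y y' := by
      rcases hy'1 with h | h
      · exact absurd (h ▸ hy) hy'X
      · exact h
    have ha : ∀ u ∈ X, u ≠ x → ¬(x' = u ∨ G.Adj u x') := fun u hu hux => hx'2 u hu hux
    have ha' : ∀ u ∈ X, u ≠ y → ¬(y' = u ∨ G.Adj u y') := fun u hu huy => hy'2 u hu huy
    have hne' : x' ≠ y' := by
      intro h
      exact ha y hy hxy.symm (Or.inr (h ▸ hay))
    exact build_c4 X hX x y x' y' hx hy hxy hx'X hy'X hne' hax hay ha ha'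
      (fun u hu _ v hv _ => hind u hu v hv)
      (fun u hu _ v hv _ => hind u hu v hv)
      (fun u hu _ _ v hv => hind u hu v hv)
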